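/- Let V be a pure isometry on H₁ and T an isometry on H₂, W = ker V*, and Ψ : W → H₂ an isometry such that the intertwiner M_Ψ (given by M_Ψ(Vⁿw) = TⁿΨw) is bounded. Then M_Ψ is an isometry if and only if Ψ is an isometry and Ψ(W) is a wandering subspace for T, i.e., Ψ(W) ⊥ Tⁿ(Ψ(W)) for all n ≥ 1. -/

import Mathlib

open scoped InnerProductSpace
open Filter Topology

set_option maxHeartbeats 1000000 in
/-- `M_Ψ` is an isometry iff `Ψ` is an isometry and `Ψ(W)` is a wandering
subspace for `T`. -/
theorem multi_analytic_isometry_iff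
    {H₁ H₂ : Type*} [NormedAddCommGroup H₁] [InnerProductSpace ℂ H₁] [CompleteSpace H₁]
    [NormedAddCommGroup H₂] [InnerProductSpace ℂ H₂] [CompleteSpace H₂]
    (V : H₁ →L[ℂ] H₁) (hV : ∀ x, ‖V x‖ = ‖x‖)
    (hpure : ∀ x : H₁, Tendsto (fun n : ℕ => (V ^ n) ((ContinuousLinearMap.adjoint V ^ n) x))
      atTop (𝓝 0))
    (T : H₂ →L[ℂ] H₂) (hT : ∀ x, ‖T x‖ = ‖x‖)
    (Ψ : LinearMap.ker (ContinuousLinearMap.adjoint V : H₁ →ₗ[ℂ] H₁) →L[ℂ] H₂)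
    (M : H₁ →L[ℂ] H₂)
    (hM : ∀ (n : ℕ) (w : LinearMap.ker (ContinuousLinearMap.adjoint V : H₁ →ₗ[ℂ] H₁)),
      M ((V ^ n) (w : H₁)) = (T ^ n) (Ψ w)) :
    (∀ x, ‖M x‖ = ‖x‖) ↔
      ((∀ w : LinearMap.ker (ContinuousLinearMap.adjoint V : H₁ →ₗ[ℂ] H₁), ‖Ψ w‖ = ‖w‖) ∧
       (∀ n : ℕ, 1 ≤ n → ∀ w w' : LinearMap.ker (ContinuousLinearMap.adjoint V : H₁ →ₗ[ℂ] H₁),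
          ⟪Ψ w, (T ^ n) (Ψ w')⟫_ℂ = 0)) := by
  classical
  -- inner product preservation
  have hVi : ∀ x y : H₁, ⟪V x, V y⟫_ℂ = ⟪x, y⟫_ℂ := fun x y =>
    LinearIsometry.inner_map_map ⟨V.toLinearMap, hV⟩ x y
  have hTi : ∀ x y : H₂, ⟪T x, T y⟫_ℂ = ⟪x, y⟫_ℂ := fun x y =>
    LinearIsometry.inner_map_map ⟨T.toLinearMap, hT⟩ x y
  have hVn : ∀ (n : ℕ) (x y : H₁), ⟪(V ^ n) x, (V ^ n) y⟫_ℂ = ⟪x, y⟫_ℂ := by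
    intro n
    induction n with
    | zero => simp
    | succ n ih =>
      intro x y
      rw [pow_succ, ContinuousLinearMap.mul_apply, ContinuousLinearMap.mul_apply, ih, hVi]
  have hTn : ∀ (n : ℕ) (x y : H₂), ⟪(T ^ n) x, (T ^ n) y⟫_ℂ = ⟪x, y⟫_ℂ := by
    intro n
    induction n with
    | zero => simp
    | succ n ih =>
      intro x y
      rw [pow_succ, ContinuousLinearMap.mul_apply, ContinuousLinearMap.mul_apply, ih, hTi]
  -- adjoint kills W after one step
  have hWperp : ∀ k : ℕ, 1 ≤ k →
      ∀ w w' : LinearMap.ker (ContinuousLinearMap.adjoint V : H₁ →ₗ[ℂ] H₁),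
      ⟪(w : H₁), (V ^ k) (w' : H₁)⟫_ℂ = 0 := by
    intro k hk w w'
    obtain ⟨m, rfl⟩ := Nat.exists_eq_add_of_le hk
    rw [← ContinuousLinearMap.adjoint_inner_left]
    have hadj : ContinuousLinearMap.adjoint (V ^ (1 + m)) =
        ContinuousLinearMap.adjoint V ^ (1 + m) := by
      rw [← ContinuousLinearMap.star_eq_adjoint, ← ContinuousLinearMap.star_eq_adjoint,
        star_pow]
    rw [hadj]
    have h0 : (ContinuousLinearMap.adjoint V ^ (1 + m)) (w : H₁) = 0 := by
      rw [add_comm, pow_succ, ContinuousLinearMap.mul_apply,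
        (show ContinuousLinearMap.adjoint V (w : H₁) = 0 from w.2), map_zero]
    rw [h0, inner_zero_left]
  constructor
  · -- forward direction
    intro hMiso
    have hMi : ∀ x y : H₁, ⟪M x, M y⟫_ℂ = ⟪x, y⟫_ℂ := fun x y =>
      LinearIsometry.inner_map_map ⟨M.toLinearMap, hMiso⟩ x y
    have hM0 : ∀ w : LinearMap.ker (ContinuousLinearMap.adjoint V : H₁ →ₗ[ℂ] H₁), M (w : H₁) = Ψ w := by
      intro w
      have := hM 0 w
      simpa using this
    constructor
    · intro w
      rw [← hM0 w, hMiso]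
      rfl
    · intro n hn w w'
      rw [← hM0 w, ← hM n w', hMi]
      exact hWperp n hn w w'
  · -- backward direction
    rintro ⟨hΨ, hwand⟩ x
    have hΨi : ∀ w w' : LinearMap.ker (ContinuousLinearMap.adjoint V : H₁ →ₗ[ℂ] H₁),
        ⟪Ψ w, Ψ w'⟫_ℂ = ⟪(w : H₁), (w' : H₁)⟫_ℂ := by
      intro w w'
      have := LinearIsometry.inner_map_map ⟨Ψ.toLinearMap, hΨ⟩ w w'
      rwa [Submodule.coe_inner] at this
    -- key inner product equality
    have hKle : ∀ m n : ℕ, m ≤ n → ∀ w w' : LinearMap.ker (ContinuousLinearMap.adjoint V : H₁ →ₗ[ℂ] H₁),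
        ⟪(T ^ m) (Ψ w), (T ^ n) (Ψ w')⟫_ℂ = ⟪(V ^ m) (w : H₁), (V ^ n) (w' : H₁)⟫_ℂ := by
      intro m n hmn w w'
      obtain ⟨k, rfl⟩ := Nat.exists_eq_add_of_le hmn
      rw [pow_add, ContinuousLinearMap.mul_apply, hTn, pow_add,
        ContinuousLinearMap.mul_apply, hVn]
      rcases Nat.eq_zero_or_pos k with hk | hk
      · subst hk
        simpa using hΨi w w'
      · rw [hwand k hk w w', hWperp k hk w w']
    have hK : ∀ m n : ℕ, ∀ w w' : LinearMap.ker (ContinuousLinearMap.adjoint V : H₁ →ₗ[ℂ] H₁),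
        ⟪(T ^ m) (Ψ w), (T ^ n) (Ψ w')⟫_ℂ = ⟪(V ^ m) (w : H₁), (V ^ n) (w' : H₁)⟫_ℂ := by
      intro m n w w'
      rcases le_total m n with h | h
      · exact hKle m n h w w'
      · rw [← inner_conj_symm, hKle n m h w' w, inner_conj_symm]
    -- A ∘ V = id
    have hAV : ∀ z : H₁, ContinuousLinearMap.adjoint V (V z) = z := by
      intro z
      have hcomp := (ContinuousLinearMap.norm_map_iff_adjoint_comp_self V).mp hV
      have := ContinuousLinearMap.ext_iff.mp hcomp z
      simpa using this
    -- the wandering components of x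
    set w : ℕ → LinearMap.ker (ContinuousLinearMap.adjoint V : H₁ →ₗ[ℂ] H₁) := fun n =>
      ⟨(ContinuousLinearMap.adjoint V ^ n) x -
          V (ContinuousLinearMap.adjoint V ((ContinuousLinearMap.adjoint V ^ n) x)), by
        simp only [LinearMap.mem_ker, ContinuousLinearMap.coe_coe, map_sub, hAV, sub_self]⟩
      with hw
    set s : ℕ → H₁ := fun N => ∑ n ∈ Finset.range N, (V ^ n) ((w n : H₁)) with hs
    have hres : ∀ N, x - s N = (V ^ N) ((ContinuousLinearMap.adjoint V ^ N) x) := by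
      intro N
      induction N with
      | zero => simp [hs]
      | succ N ih =>
        have hstep : s (N + 1) = s N + (V ^ N) ((w N : H₁)) :=
          Finset.sum_range_succ _ N
        rw [hstep, sub_add_eq_sub_sub, ih]
        have hwN : ((w N : H₁)) = (ContinuousLinearMap.adjoint V ^ N) x -
            V (ContinuousLinearMap.adjoint V ((ContinuousLinearMap.adjoint V ^ N) x)) := rfl
        rw [hwN, map_sub, sub_sub_cancel, pow_succ, ContinuousLinearMap.mul_apply,
          pow_succ', ContinuousLinearMap.mul_apply]
    have hlim : Tendsto s atTop (𝓝 x) := by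
      have h1 : Tendsto
          (fun N => x - (V ^ N) ((ContinuousLinearMap.adjoint V ^ N) x)) atTop (𝓝 (x - 0)) :=
        tendsto_const_nhds.sub (hpure x)
      have h2 : (fun N => x - (V ^ N) ((ContinuousLinearMap.adjoint V ^ N) x)) = s := by
        funext N
        rw [← hres N, sub_sub_cancel]
      rw [h2, sub_zero] at h1
      exact h1
    have hnorm : ∀ N, ‖M (s N)‖ = ‖s N‖ := by
      intro N
      have hMs : M (s N) = ∑ n ∈ Finset.range N, (T ^ n) (Ψ (w n)) := by
        rw [hs, map_sum]
        exact Finset.sum_congr rfl fun n _ => hM n (w n)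
      have hinner : ⟪M (s N), M (s N)⟫_ℂ = ⟪s N, s N⟫_ℂ := by
        rw [hMs, hs]
        rw [sum_inner, sum_inner]
        refine Finset.sum_congr rfl fun m _ => ?_
        rw [inner_sum, inner_sum]
        exact Finset.sum_congr rfl fun n _ => hK m n (w m) (w n)
      have h1 := inner_self_eq_norm_sq (𝕜 := ℂ) (M (s N))
      have h2 := inner_self_eq_norm_sq (𝕜 := ℂ) (s N)
      have hsq' : ‖M (s N)‖ ^ 2 = ‖s N‖ ^ 2 := by rw [← h1, ← h2, hinner]
      nlinarith [norm_nonneg (M (s N)), norm_nonneg (s N)]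
    have l1 : Tendsto (fun N => ‖M (s N)‖) atTop (𝓝 ‖M x‖) :=
      ((M.continuous.tendsto x).comp hlim).norm
    have l2 : Tendsto (fun N => ‖s N‖) atTop (𝓝 ‖x‖) := hlim.norm
    have heq : (fun N => ‖M (s N)‖) = fun N => ‖s N‖ := funext hnorm
    rw [heq] at l1
    exact tendsto_nhds_unique l1 l2
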